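/- Let P = (p_1, ..., p_k) and Q = (q_1, ..., q_k) be probability vectors with p_i > 0 for all i and p_1 ≥ p_2 ≥ ... ≥ p_k. If there exists j ≠ 1 with q_j ≥ q_1, then the squared Hellinger distance 1 - ∑_i √(p_i q_i) is at least 1 - √((2 - (√p_1 - √p_2)^2)/2). -/

import Mathlib

/-- Squared Hellinger distance lower bound when the argmax of `Q` differs from that of `P`. -/
theorem hellinger_lower_bound (k : ℕ) (P Q : Fin (k + 2) → ℝ)
    (hPpos : ∀ i, 0 < P i) (hPsum : ∑ i, P i = 1)
    (hQnn : ∀ i, 0 ≤ Q i) (hQsum : ∑ i, Q i = 1)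
    (hPmono : ∀ i j : Fin (k + 2), i ≤ j → P j ≤ P i)
    (hmax : ∃ j : Fin (k + 2), j ≠ 0 ∧ Q 0 ≤ Q j) :
    1 - Real.sqrt ((2 - (Real.sqrt (P 0) - Real.sqrt (P 1)) ^ 2) / 2) ≤
      1 - ∑ i, Real.sqrt (P i * Q i) := by
  obtain ⟨j, hj0, hQ0j⟩ := hmax
  set a := Real.sqrt (P 0) with ha_def
  set b := Real.sqrt (P j) with hb_def
  have ha : 0 < a := Real.sqrt_pos.2 (hPpos 0)
  have hb : 0 < b := Real.sqrt_pos.2 (hPpos j)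
  have hab : 0 < a + b := by linarith
  have hba : b ≤ a := Real.sqrt_le_sqrt (hPmono 0 j (Fin.zero_le j))
  have hP0 : a ^ 2 = P 0 := Real.sq_sqrt (hPpos 0).le
  have hPj : b ^ 2 = P j := Real.sq_sqrt (hPpos j).le
  set w : Fin (k+2) → ℝ := fun i =>
    if i = 0 then (a+b)/(2*a) else if i = j then (a+b)/(2*b) else 1 with hw
  have hwpos : ∀ i, 0 < w i := by
    intro i
    simp only [hw]
    split_ifs <;> positivity
  set s : Finset (Fin (k+2)) := (Finset.univ.erase 0).erase j with hs
  have hjmem : j ∈ Finset.univ.erase (0 : Fin (k+2)) :=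
    Finset.mem_erase.2 ⟨hj0, Finset.mem_univ j⟩
  have hsplit : ∀ f : Fin (k+2) → ℝ, ∑ i, f i = f 0 + (f j + ∑ i ∈ s, f i) := by
    intro f
    rw [hs, Finset.add_sum_erase _ f hjmem, Finset.add_sum_erase _ f (Finset.mem_univ 0)]
  have hws : ∀ i ∈ s, w i = 1 := by
    intro i hi
    rw [hs] at hi
    obtain ⟨hij, hi'⟩ := Finset.mem_erase.1 hi
    obtain ⟨hi0, -⟩ := Finset.mem_erase.1 hi'
    simp [hw, hi0, hij]
  have hw0 : w 0 = (a+b)/(2*a) := by simp [hw, Ne.symm hj0]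
  have hwj : w j = (a+b)/(2*b) := by simp [hw, hj0]
  -- value of ∑ w i * P i
  have hrestP : ∑ i ∈ s, P i = 1 - P 0 - P j := by
    have := hsplit P
    rw [hPsum] at this
    linarith
  have hA : ∑ i, w i * P i = 1 - (a-b)^2/2 := by
    rw [hsplit fun i => w i * P i]
    rw [Finset.sum_congr rfl fun i hi => by rw [hws i hi, one_mul], hrestP, hw0, hwj,
      ← hP0, ← hPj]
    field_simp
    ring
  -- bound on ∑ Q i / w i
  have hB : ∑ i, Q i / w i ≤ 1 := by
    rw [hsplit fun i => Q i / w i,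
      Finset.sum_congr rfl fun i hi => by rw [hws i hi, div_one]]
    have hrestQ : ∑ i ∈ s, Q i = 1 - Q 0 - Q j := by
      have := hsplit Q
      rw [hQsum] at this
      linarith
    rw [hrestQ, hw0, hwj, div_div_eq_mul_div, div_div_eq_mul_div]
    have key : Q 0 * (2*a) / (a+b) + Q j * (2*b) / (a+b) ≤ Q 0 + Q j := by
      rw [← add_div, div_le_iff₀ hab]
      nlinarith [mul_nonneg (sub_nonneg.2 hba) (sub_nonneg.2 hQ0j)]
    linarith
  -- Cauchy-Schwarz
  have hCS : (∑ i, Real.sqrt (P i * Q i)) ^ 2 ≤ (∑ i, w i * P i) * ∑ i, Q i / w i := by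
    apply Finset.sum_sq_le_sum_mul_sum_of_sq_eq_mul
    · exact fun i _ => mul_nonneg (hwpos i).le (hPpos i).le
    · exact fun i _ => div_nonneg (hQnn i) (hwpos i).le
    · intro i _
      rw [Real.sq_sqrt (mul_nonneg (hPpos i).le (hQnn i))]
      have hwi := (hwpos i).ne'
      field_simp
  have hSnn : 0 ≤ ∑ i, Real.sqrt (P i * Q i) :=
    Finset.sum_nonneg fun i _ => Real.sqrt_nonneg _
  have hApos : 0 ≤ 1 - (a-b)^2/2 := by
    have h1 : P 0 + P j ≤ 1 := by
      have h2 : 0 ≤ ∑ i ∈ s, P i := Finset.sum_nonneg fun i _ => (hPpos i).le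
      linarith [hrestP]
    nlinarith [mul_pos ha hb]
  have hS2 : (∑ i, Real.sqrt (P i * Q i)) ^ 2 ≤ (2 - (a-b)^2)/2 := by
    calc (∑ i, Real.sqrt (P i * Q i)) ^ 2 ≤ (∑ i, w i * P i) * ∑ i, Q i / w i := hCS
      _ ≤ (1 - (a-b)^2/2) * 1 := by rw [hA]; exact mul_le_mul_of_nonneg_left hB hApos
      _ = (2 - (a-b)^2)/2 := by ring
  have hS : ∑ i, Real.sqrt (P i * Q i) ≤ Real.sqrt ((2 - (a-b)^2)/2) :=
    (Real.le_sqrt hSnn (by linarith)).2 hS2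
  -- compare with P 1
  have hj1 : (1 : Fin (k+2)) ≤ j := by
    rw [Fin.le_def]
    have : (0:ℕ) < j.val := Nat.pos_of_ne_zero fun h => hj0 (Fin.ext h)
    simp only [Fin.val_one]
    omega
  have hb1 : b ≤ Real.sqrt (P 1) := Real.sqrt_le_sqrt (hPmono 1 j hj1)
  have hc1 : Real.sqrt (P 1) ≤ a := Real.sqrt_le_sqrt (hPmono 0 1 (by norm_num [Fin.le_def]))
  have hmono : Real.sqrt ((2 - (a-b)^2)/2)
      ≤ Real.sqrt ((2 - (a - Real.sqrt (P 1))^2)/2) := by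
    apply Real.sqrt_le_sqrt
    nlinarith
  linarith [hS.trans hmono]
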